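/- Let G be a group with finite generating set X, and suppose there is a subset 𝒩 ⊆ G such that (i) |𝒩 ∩ B_X(n)|/|B_X(n)| → 0 as n → ∞, and (ii) |C(g) ∩ B_X(n)|/|B_X(n)| → 0 uniformly over g ∈ G ∖ 𝒩. Then dc_X(G) = 0, and moreover the defining sequence converges to 0 (the limsup is a genuine limit). -/

import Mathlib

open Filter

/-- The ball of radius `n` in the word metric on `G` with respect to `X`. -/
def ball {G : Type*} [Group G] (X : Finset G) (n : ℕ) : Set G :=
  {g | ∃ l : List G, l.length ≤ n ∧ (∀ x ∈ l, x ∈ X ∨ x⁻¹ ∈ X) ∧ l.prod = g}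

/-- The proportion of commuting pairs in the ball of radius `n`. -/
noncomputable def dcSeq {G : Type*} [Group G] (X : Finset G) (n : ℕ) : ℝ :=
  (Nat.card {p : G × G // p.1 ∈ ball X n ∧ p.2 ∈ ball X n ∧ p.1 * p.2 = p.2 * p.1} : ℝ) /
    (Nat.card (ball X n) : ℝ) ^ 2

/-- The degree of commutativity of `G` with respect to the finite generating set `X`. -/
noncomputable def dcX {G : Type*} [Group G] (X : Finset G) : ℝ :=
  limsup (dcSeq X) atTop

lemma one_mem_ball {G : Type*} [Group G] (X : Finset G) (n : ℕ) : (1 : G) ∈ ball X n :=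
  ⟨[], by simp, by simp, rfl⟩

open scoped Pointwise in
lemma ball_finite {G : Type*} [Group G] (X : Finset G) (n : ℕ) : (ball X n).Finite := by
  induction n with
  | zero =>
    apply Set.Finite.subset (Set.finite_singleton (1 : G))
    rintro g ⟨l, hl, -, rfl⟩
    rw [Nat.le_zero, List.length_eq_zero_iff] at hl
    simp [hl]
  | succ n ih =>
    have hS : {x : G | x ∈ X ∨ x⁻¹ ∈ X}.Finite := by
      apply Set.Finite.subset (X.finite_toSet.union (X.finite_toSet.preimage
        (Set.injOn_of_injective inv_injective)))
      rintro x (hx | hx)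
      · exact Or.inl hx
      · exact Or.inr hx
    apply Set.Finite.subset (ih.union (hS.mul ih))
    rintro g ⟨l, hl, hx, rfl⟩
    cases l with
    | nil => exact Or.inl (one_mem_ball X n)
    | cons a t =>
      refine Or.inr ⟨a, hx a List.mem_cons_self, t.prod,
        ⟨t, ?_, fun x hx' => hx x (List.mem_cons_of_mem a hx'), rfl⟩, ?_⟩
      · simpa using hl
      · simp

/-- If there is a negligible set `𝒩 ⊆ G` such that centralizers of elements outside `𝒩`
are uniformly negligible in balls, then `dc_X(G) = 0`, and in fact the sequence of
proportions of commuting pairs genuinely converges to `0`. -/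
theorem dcX_eq_zero_of_negligible (G : Type*) [Group G] (X : Finset G)
    (hX : Subgroup.closure (X : Set G) = ⊤) (𝒩 : Set G)
    (h1 : Tendsto (fun n =>
        (Nat.card ↥(𝒩 ∩ ball X n) : ℝ) / (Nat.card (ball X n) : ℝ))
      atTop (nhds 0))
    (h2 : ∀ ε : ℝ, 0 < ε → ∃ n₁ : ℕ, ∀ n ≥ n₁, ∀ g : G, g ∉ 𝒩 →
      (Nat.card ↥((Subgroup.centralizer {g} : Set G) ∩ ball X n) : ℝ) <
        ε * (Nat.card (ball X n) : ℝ)) :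
    dcX X = 0 ∧ Tendsto (dcSeq X) atTop (nhds 0) := by
  classical
  -- notation for the finset versions of the balls
  set Bf : ℕ → Finset G := fun n => (ball_finite X n).toFinset with hBf
  have hBmem : ∀ n (g : G), g ∈ Bf n ↔ g ∈ ball X n := fun n g =>
    (ball_finite X n).mem_toFinset
  have hBcard : ∀ n, (Nat.card (ball X n) : ℕ) = (Bf n).card := by
    intro n
    rw [Nat.card_coe_set_eq, Set.ncard_eq_toFinset_card _ (ball_finite X n)]
  have hBpos : ∀ n, 0 < ((Bf n).card : ℝ) := by
    intro n
    have : (1 : G) ∈ Bf n := (hBmem n 1).2 (one_mem_ball X n)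
    exact_mod_cast Finset.card_pos.2 ⟨1, this⟩
  -- the finset of commuting pairs
  set F : ℕ → Finset (G × G) := fun n =>
    ((Bf n) ×ˢ (Bf n)).filter (fun p => p.1 * p.2 = p.2 * p.1) with hF
  have hFcard : ∀ n,
      (Nat.card {p : G × G // p.1 ∈ ball X n ∧ p.2 ∈ ball X n ∧ p.1 * p.2 = p.2 * p.1} : ℕ)
        = (F n).card := by
    intro n
    have hset : {p : G × G | p.1 ∈ ball X n ∧ p.2 ∈ ball X n ∧ p.1 * p.2 = p.2 * p.1}
        = ↑(F n) := by
      ext p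
      simp [hF, Finset.mem_filter, hBmem, and_assoc]
    calc Nat.card {p : G × G // p.1 ∈ ball X n ∧ p.2 ∈ ball X n ∧ p.1 * p.2 = p.2 * p.1}
        = Nat.card {p : G × G | p.1 ∈ ball X n ∧ p.2 ∈ ball X n ∧ p.1 * p.2 = p.2 * p.1} := rfl
      _ = (F n).card := by rw [Nat.card_coe_set_eq, hset, Set.ncard_coe_finset]
  -- the negligible-set part
  have hNf : ∀ n, (𝒩 ∩ ball X n).Finite := fun n =>
    Set.Finite.inter_of_right (ball_finite X n) 𝒩
  set Nf : ℕ → Finset G := fun n => (hNf n).toFinset with hNfdef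
  have hNcard : ∀ n, (Nat.card ↥(𝒩 ∩ ball X n) : ℕ) = (Nf n).card := by
    intro n
    rw [Nat.card_coe_set_eq, Set.ncard_eq_toFinset_card _ (hNf n)]
  -- main estimate
  have key : ∀ ε : ℝ, 0 < ε → ∃ n₁ : ℕ, ∀ n ≥ n₁,
      dcSeq X n ≤ ((Nf n).card : ℝ) / ((Bf n).card : ℝ) + ε := by
    intro ε hε
    obtain ⟨n₁, hn₁⟩ := h2 ε hε
    refine ⟨n₁, fun n hn => ?_⟩
    -- split F n
    set F₁ : Finset (G × G) := (F n).filter (fun p => p.1 ∈ 𝒩) with hF₁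
    set F₂ : Finset (G × G) := (F n).filter (fun p => p.1 ∉ 𝒩) with hF₂
    have hsplit : (F n).card ≤ F₁.card + F₂.card := by
      rw [hF₁, hF₂, Finset.card_filter_add_card_filter_not]
    have h₁ : F₁.card ≤ (Nf n).card * (Bf n).card := by
      have : F₁ ⊆ (Nf n) ×ˢ (Bf n) := by
        intro p hp
        rw [hF₁, Finset.mem_filter, hF, Finset.mem_filter, Finset.mem_product] at hp
        rw [Finset.mem_product]
        refine ⟨?_, hp.1.1.2⟩
        rw [hNfdef, (hNf n).mem_toFinset]
        exact ⟨hp.2, (hBmem n p.1).1 hp.1.1.1⟩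
      calc F₁.card ≤ ((Nf n) ×ˢ (Bf n)).card := Finset.card_le_card this
        _ = (Nf n).card * (Bf n).card := Finset.card_product _ _
    have h₂ : (F₂.card : ℝ) ≤ ((Bf n).card : ℝ) * (ε * ((Bf n).card : ℝ)) := by
      have hfib : F₂.card = ∑ u ∈ Bf n, (F₂.filter (fun p => p.1 = u)).card := by
        apply Finset.card_eq_sum_card_fiberwise
        intro p hp
        simp only [Finset.mem_coe, hF₂, Finset.mem_filter, hF, Finset.mem_product] at hp
        exact hp.1.1.1
      have hfibb : ∀ u ∈ Bf n, ((F₂.filter (fun p => p.1 = u)).card : ℝ)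
          ≤ ε * ((Bf n).card : ℝ) := by
        intro u _
        by_cases hu : u ∈ 𝒩
        · have : F₂.filter (fun p => p.1 = u) = ∅ := by
            rw [Finset.filter_eq_empty_iff]
            intro p hp hpu
            rw [hF₂, Finset.mem_filter] at hp
            exact hp.2 (hpu ▸ hu)
          rw [this]
          simp only [Finset.card_empty, Nat.cast_zero]
          positivity
        · -- inject the fiber into the centralizer ∩ ball
          have hCfin : ((Subgroup.centralizer {u} : Set G) ∩ ball X n).Finite :=
            Set.Finite.inter_of_right (ball_finite X n) _
          have hinj : (F₂.filter (fun p => p.1 = u)).card ≤ hCfin.toFinset.card := by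
            apply Finset.card_le_card_of_injOn (fun p => p.2)
            · intro p hp
              simp only [Finset.mem_coe, Finset.mem_filter, hF₂, hF,
                Finset.mem_product] at hp
              rw [Finset.mem_coe, hCfin.mem_toFinset]
              refine ⟨?_, (hBmem n p.2).1 hp.1.1.1.2⟩
              rw [SetLike.mem_coe, Subgroup.mem_centralizer_singleton_iff]
              have := hp.1.1.2
              rw [hp.2] at this
              exact this.symm
            · intro p hp q hq hpq
              rw [Finset.mem_coe, Finset.mem_filter] at hp hq
              exact Prod.ext (hp.2.trans hq.2.symm) hpq
          have hCcard : (Nat.card ↥((Subgroup.centralizer {u} : Set G) ∩ ball X n) : ℕ)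
              = hCfin.toFinset.card := by
            rw [Nat.card_coe_set_eq, Set.ncard_eq_toFinset_card _ hCfin]
          have := hn₁ n hn u hu
          rw [hBcard, hCcard] at this
          calc ((F₂.filter (fun p => p.1 = u)).card : ℝ) ≤ (hCfin.toFinset.card : ℝ) := by
                exact_mod_cast hinj
            _ ≤ ε * ((Bf n).card : ℝ) := le_of_lt this
      calc (F₂.card : ℝ) = ∑ u ∈ Bf n, ((F₂.filter (fun p => p.1 = u)).card : ℝ) := by
            rw [hfib]; push_cast; ring
        _ ≤ ∑ _u ∈ Bf n, (ε * ((Bf n).card : ℝ)) := Finset.sum_le_sum hfibb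
        _ = ((Bf n).card : ℝ) * (ε * ((Bf n).card : ℝ)) := by
            rw [Finset.sum_const, nsmul_eq_mul]
    -- combine
    have hd : dcSeq X n = ((F n).card : ℝ) / ((Bf n).card : ℝ) ^ 2 := by
      rw [dcSeq, hFcard, hBcard]
    rw [hd]
    have hB := hBpos n
    have hFle : ((F n).card : ℝ) ≤ ((Nf n).card : ℝ) * ((Bf n).card : ℝ)
        + ((Bf n).card : ℝ) * (ε * ((Bf n).card : ℝ)) := by
      calc ((F n).card : ℝ) ≤ (F₁.card : ℝ) + (F₂.card : ℝ) := by exact_mod_cast hsplit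
        _ ≤ ((Nf n).card : ℝ) * ((Bf n).card : ℝ)
            + ((Bf n).card : ℝ) * (ε * ((Bf n).card : ℝ)) := by
          gcongr
          exact_mod_cast h₁
    calc ((F n).card : ℝ) / ((Bf n).card : ℝ) ^ 2
        ≤ (((Nf n).card : ℝ) * ((Bf n).card : ℝ)
            + ((Bf n).card : ℝ) * (ε * ((Bf n).card : ℝ))) / ((Bf n).card : ℝ) ^ 2 := by
          gcongr
      _ = ((Nf n).card : ℝ) / ((Bf n).card : ℝ) + ε := by
          field_simp
  -- nonnegativity of dcSeq
  have hnonneg : ∀ n, 0 ≤ dcSeq X n := by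
    intro n
    rw [dcSeq]
    positivity
  -- conclude the tendsto statement
  have htends : Tendsto (dcSeq X) atTop (nhds 0) := by
    rw [Metric.tendsto_atTop]
    intro ε hε
    obtain ⟨n₁, hn₁⟩ := key (ε / 2) (by linarith)
    have h1' := Metric.tendsto_atTop.1 h1 (ε / 4) (by linarith)
    obtain ⟨n₂, hn₂⟩ := h1'
    refine ⟨max n₁ n₂, fun n hn => ?_⟩
    have hn₁' : n ≥ n₁ := le_trans (le_max_left _ _) hn
    have hn₂' : n ≥ n₂ := le_trans (le_max_right _ _) hn
    have hupper := hn₁ n hn₁'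
    have hN := hn₂ n hn₂'
    rw [Real.dist_eq, sub_zero] at hN ⊢
    have hNval : (Nat.card ↥(𝒩 ∩ ball X n) : ℝ) / (Nat.card (ball X n) : ℝ)
        = ((Nf n).card : ℝ) / ((Bf n).card : ℝ) := by
      rw [hNcard, hBcard]
    rw [hNval] at hN
    have hNnn : 0 ≤ ((Nf n).card : ℝ) / ((Bf n).card : ℝ) := by positivity
    rw [abs_of_nonneg hNnn] at hN
    rw [abs_of_nonneg (hnonneg n)]
    linarith
  exact ⟨htends.limsup_eq, htends⟩
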